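/- arXiv:1811.11578 — 5 statements merged into one kernel-verified Lean document; each statement's English description precedes it below -/
import Mathlib

section
/- Under the GOSPAL pricing rule, the price charged to any user is at most its bid: for any bid vector q with q_i > 0 for all i, 0 ≤ p_i(q) ≤ q_i for every user i. -/
open Finset

/-- Perceived social utility of the (bid-independent) allocation `A ω` under bids `q`. -/
def Ut {V Ω : Type*} (A : Ω → Finset V) (q : V → ℝ) (ω : Ω) : ℝ := ∑ j ∈ A ω, q j

/-- Maximum perceived social utility over all group orderings. -/
noncomputable def Ustar {V Ω : Type*} [Fintype Ω] [Nonempty Ω]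
    (A : Ω → Finset V) (q : V → ℝ) : ℝ :=
  Finset.univ.sup' Finset.univ_nonempty (fun ω => Ut A q ω)

/-- GOSPAL price for user `i` under bids `q`, when the ordering `ω` is selected:
`p_i(q) = (lim_{ε→0⁺} Ũ*(q_{-i}(ε)) − (Ũ*(q) − q_i)) · x_i(ω)`; the limit term equals
`Ũ*` evaluated with user `i`'s bid set to `0` (by continuity of `Ũ*`). -/
noncomputable def price {V Ω : Type*} [Fintype Ω] [Nonempty Ω] [DecidableEq V]
    (A : Ω → Finset V) (q : V → ℝ) (i : V) (ω : Ω) : ℝ :=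
  (Ustar A (Function.update q i 0) - (Ustar A q - q i)) * (if i ∈ A ω then 1 else 0)

/-- Under the GOSPAL pricing rule, for any bid vector `q` with `q i > 0`
for all users, the price charged to any user is nonnegative and at most its bid. -/
theorem gospal_price_bounds {V Ω : Type*} [Fintype V] [Fintype Ω] [Nonempty Ω]
    [DecidableEq V]
    (A : Ω → Finset V) (q : V → ℝ) (hq : ∀ j, 0 < q j)
    (ω : Ω) (hmax : ∀ ω' : Ω, Ut A q ω' ≤ Ut A q ω) (i : V) :
    0 ≤ price A q i ω ∧ price A q i ω ≤ q i := by
  have hle : ∀ ω', Ut A q ω' - q i ≤ Ut A (Function.update q i 0) ω' := by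
    intro ω'
    have : Ut A q ω' - Ut A (Function.update q i 0) ω' ≤ q i := by
      unfold Ut
      rw [← Finset.sum_sub_distrib]
      have hsum : ∑ j ∈ A ω', (q j - Function.update q i 0 j)
          = ∑ j ∈ A ω', (if j = i then q i else 0) := by
        apply Finset.sum_congr rfl
        intro j _
        by_cases h : j = i
        · subst h; simp [Function.update_self]
        · simp [Function.update_of_ne h, h]
      rw [hsum, Finset.sum_ite_eq' (A ω') i (fun _ => q i)]
      split
      · exact le_refl _
      · exact (hq i).le
    linarith
  have hge : ∀ ω', Ut A (Function.update q i 0) ω' ≤ Ut A q ω' := by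
    intro ω'
    unfold Ut
    apply Finset.sum_le_sum
    intro j _
    by_cases h : j = i
    · subst h; simp [Function.update_self]; exact (hq j).le
    · simp [Function.update_of_ne h]
  have h1 : Ustar A q - q i ≤ Ustar A (Function.update q i 0) := by
    unfold Ustar
    rw [sub_le_iff_le_add]
    apply Finset.sup'_le
    intro ω' _
    have := hle ω'
    have h2 : Ut A (Function.update q i 0) ω' ≤
        Finset.univ.sup' Finset.univ_nonempty (fun ω => Ut A (Function.update q i 0) ω) :=
      Finset.le_sup' _ (Finset.mem_univ ω')
    linarith
  have h2 : Ustar A (Function.update q i 0) ≤ Ustar A q := by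
    unfold Ustar
    apply Finset.sup'_le
    intro ω' _
    exact le_trans (hge ω') (Finset.le_sup' _ (Finset.mem_univ ω'))
  constructor
  · apply mul_nonneg (by linarith)
    split <;> norm_num
  · by_cases h : i ∈ A ω
    · simp only [price, h, if_true, mul_one]
      linarith
    · simp only [price, h, if_false, mul_zero]
      exact (hq i).le
end

section
/- The GOSPAL mechanism is strategy-proof: for every user i, every true valuation r_i > 0, and every bid vector q (with q_j > 0 for all j), the utility of user i when bidding r_i is at least its utility when bidding q_i, holding other bids fixed. That is, U_i(r_i, q_{-i}) ≥ U_i(q_i, q_{-i}). -/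
open Finset

lemma Ut_update_mem {V Ω : Type*} [DecidableEq V] (A : Ω → Finset V) (q : V → ℝ)
    (i : V) (b : ℝ) {ω : Ω} (h : i ∈ A ω) :
    Ut A (Function.update q i b) ω = Ut A (Function.update q i 0) ω + b := by
  unfold Ut
  rw [Finset.sum_update_of_mem h, Finset.sum_update_of_mem h]
  ring

lemma Ut_update_notMem {V Ω : Type*} [DecidableEq V] (A : Ω → Finset V) (q : V → ℝ)
    (i : V) (b : ℝ) {ω : Ω} (h : i ∉ A ω) :
    Ut A (Function.update q i b) ω = Ut A q ω := by
  unfold Ut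
  refine Finset.sum_congr rfl fun j hj => ?_
  exact Function.update_of_ne (ne_of_mem_of_not_mem hj h) _ _

lemma Ut_le_Ustar {V Ω : Type*} [Fintype Ω] [Nonempty Ω]
    (A : Ω → Finset V) (q : V → ℝ) (ω : Ω) : Ut A q ω ≤ Ustar A q :=
  Finset.le_sup' _ (Finset.mem_univ ω)

lemma Ustar_eq {V Ω : Type*} [Fintype Ω] [Nonempty Ω]
    (A : Ω → Finset V) (σ : (V → ℝ) → Ω)
    (hσ : ∀ (q : V → ℝ) (ω : Ω), Ut A q ω ≤ Ut A q (σ q)) (q : V → ℝ) :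
    Ustar A q = Ut A q (σ q) :=
  le_antisymm (Finset.sup'_le _ _ fun ω _ => hσ q ω) (Ut_le_Ustar A q (σ q))

/-- Strategy-proofness: for any tie-breaking selection rule `σ` that always
picks a perceived-utility-maximizing ordering, any user `i` with true valuation `r > 0`,
and any bid vector `q` with positive bids, the utility of user `i` when bidding its true
valuation `r` (other bids fixed) is at least its utility when bidding `q i`. -/
theorem gospal_strategy_proof {V Ω : Type*} [Fintype V] [Fintype Ω] [Nonempty Ω]
    [DecidableEq V]
    (A : Ω → Finset V) (σ : (V → ℝ) → Ω)
    (hσ : ∀ (q : V → ℝ) (ω : Ω), Ut A q ω ≤ Ut A q (σ q))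
    (i : V) (r : ℝ) (hr : 0 < r) (q : V → ℝ) (hq : ∀ j, 0 < q j) :
    (r - price A q i (σ q)) * (if i ∈ A (σ q) then 1 else 0) ≤
      (r - price A (Function.update q i r) i (σ (Function.update q i r))) *
        (if i ∈ A (σ (Function.update q i r)) then 1 else 0) := by
  set q' := Function.update q i r with hq'def
  set u0 := Function.update q i 0 with hu0def
  have hidem : Function.update q' i 0 = u0 := Function.update_idem ..
  have hself : Function.update q i (q i) = q := Function.update_eq_self i q
  have hU0S : Ustar A u0 ≤ Ustar A q' := by
    apply Finset.sup'_le
    intro ω _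
    refine le_trans ?_ (Ut_le_Ustar A q' ω)
    unfold Ut
    apply Finset.sum_le_sum
    intro j _
    by_cases hj : j = i
    · subst hj; simp [hq'def, hu0def, hr.le]
    · simp [hq'def, hu0def, Function.update_of_ne hj]
  have hSq : Ustar A q = Ut A q (σ q) := Ustar_eq A σ hσ q
  have hSq' : Ustar A q' = Ut A q' (σ q') := Ustar_eq A σ hσ q'
  by_cases h1 : i ∈ A (σ q) <;> by_cases h2 : i ∈ A (σ q')
  · -- both allocated
    simp only [h1, h2, if_true, mul_one]
    unfold price
    simp only [h1, h2, if_true, mul_one, hidem]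
    have e1 : Ut A q (σ q) = Ut A u0 (σ q) + q i := by
      have := Ut_update_mem A q i (q i) h1
      rwa [hself] at this
    have e2 : Ut A q' (σ q) = Ut A u0 (σ q) + r := Ut_update_mem A q i r h1
    have e3 : Ut A q' (σ q') = Ut A u0 (σ q') + r := Ut_update_mem A q i r h2
    have h4 : Ut A q' (σ q) ≤ Ut A q' (σ q') := hσ q' (σ q)
    have hqi : q' i = r := Function.update_self i r q
    rw [hSq, hSq', hqi, e1]
    linarith [e2 ▸ e3 ▸ h4]
  · -- misreport allocated, truthful not
    simp only [h1, h2, if_true, if_false, mul_one, mul_zero]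
    unfold price
    simp only [h1, if_true, mul_one, hidem]
    have e1 : Ut A q (σ q) = Ut A u0 (σ q) + q i := by
      have := Ut_update_mem A q i (q i) h1
      rwa [hself] at this
    have e2 : Ut A q' (σ q) = Ut A u0 (σ q) + r := Ut_update_mem A q i r h1
    have e3 : Ut A q' (σ q') = Ut A u0 (σ q') := by
      rw [hq'def, hu0def, Ut_update_notMem A q i r h2, Ut_update_notMem A q i 0 h2]
    have h4 : Ut A q' (σ q) ≤ Ut A q' (σ q') := hσ q' (σ q)
    have h5 : Ut A u0 (σ q') ≤ Ustar A u0 := Ut_le_Ustar A u0 (σ q')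
    rw [hSq, e1]
    linarith
  · -- truthful allocated, misreport not
    simp only [h1, h2, if_true, if_false, mul_one, mul_zero]
    unfold price
    simp only [h2, if_true, mul_one, hidem]
    have e3 : Ut A q' (σ q') = Ut A u0 (σ q') + r := Ut_update_mem A q i r h2
    have hqi : q' i = r := Function.update_self i r q
    rw [hSq', hqi]
    linarith [hU0S, hSq']
  · simp [h1, h2]
end

section
/- Under the GOSPAL mechanism, if user i is allocated both when bidding its true value r_i and when bidding q_i = r_i + Δ (Δ > 0, other bids fixed), then the price charged to i is the same in both cases, hence its utility is unchanged. -/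
open Finset

/-- If user `i` is allocated both when bidding its true value `r` and when
overbidding `r + Δ` (`Δ > 0`, other bids fixed), via utility-maximizing orderings in each
case, then the price charged to `i` is the same in both cases; hence its utility
`(r − p_i)` is unchanged. -/
theorem gospal_overbid_allocated_same_price {V Ω : Type*} [Fintype V] [Fintype Ω]
    [Nonempty Ω] [DecidableEq V]
    (A : Ω → Finset V) (q : V → ℝ) (i : V) (r Δ : ℝ) (hr : 0 < r) (hΔ : 0 < Δ)
    (ω₁ ω₂ : Ω)
    (hmax₁ : ∀ ω : Ω, Ut A (Function.update q i r) ω ≤ Ut A (Function.update q i r) ω₁)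
    (hmax₂ : ∀ ω : Ω, Ut A (Function.update q i (r + Δ)) ω ≤
        Ut A (Function.update q i (r + Δ)) ω₂)
    (halloc₁ : i ∈ A ω₁) (halloc₂ : i ∈ A ω₂) :
    price A (Function.update q i (r + Δ)) i ω₂ = price A (Function.update q i r) i ω₁ ∧
    r - price A (Function.update q i (r + Δ)) i ω₂ =
      r - price A (Function.update q i r) i ω₁ := by
  -- key: shifting i's bid by Δ shifts Ut by Δ on orderings containing i
  have hshift : ∀ (a b : ℝ) (ω : Ω), i ∈ A ω →
      Ut A (Function.update q i a) ω = Ut A (Function.update q i b) ω + (a - b) := by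
    intro a b ω hω
    simp only [Ut, ← Finset.add_sum_erase _ _ hω, Function.update_self]
    have : ∀ j ∈ (A ω).erase i, Function.update q i a j = Function.update q i b j := by
      intro j hj
      rw [Function.update_of_ne (Finset.ne_of_mem_erase hj),
        Function.update_of_ne (Finset.ne_of_mem_erase hj)]
    rw [Finset.sum_congr rfl this]; ring
  have hU1 : Ustar A (Function.update q i r) = Ut A (Function.update q i r) ω₁ := by
    apply le_antisymm
    · exact Finset.sup'_le _ _ fun ω _ => hmax₁ ω
    · exact Finset.le_sup' _ (Finset.mem_univ ω₁)
  have hU2 : Ustar A (Function.update q i (r + Δ)) =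
      Ut A (Function.update q i (r + Δ)) ω₂ := by
    apply le_antisymm
    · exact Finset.sup'_le _ _ fun ω _ => hmax₂ ω
    · exact Finset.le_sup' _ (Finset.mem_univ ω₂)
  -- Ut(r+Δ, ω₂) = Ut(r, ω₁) + Δ
  have hkey : Ut A (Function.update q i (r + Δ)) ω₂ = Ut A (Function.update q i r) ω₁ + Δ := by
    apply le_antisymm
    · have := hshift (r + Δ) r ω₂ halloc₂
      have h2 := hmax₁ ω₂
      linarith
    · have := hshift (r + Δ) r ω₁ halloc₁
      have h2 := hmax₂ ω₁
      linarith
  have hzero : Function.update (Function.update q i (r + Δ)) i 0 =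
      Function.update (Function.update q i r) i 0 := by
    simp [Function.update_idem]
  have hprice : price A (Function.update q i (r + Δ)) i ω₂ =
      price A (Function.update q i r) i ω₁ := by
    simp only [price, halloc₁, halloc₂, if_pos, mul_one, hzero, hU1, hU2, hkey,
      Function.update_self]
    ring
  exact ⟨hprice, by rw [hprice]⟩
end

section
/- Under the GOSPAL mechanism, if user i is not allocated when bidding r_i but is allocated when overbidding q_i = r_i + Δ (Δ > 0), then the price it pays satisfies p_i ≥ r_i, so its utility from overbidding is at most 0, which is the utility from truthful bidding. -/
open Finset

/-- If user `i` is not allocated when bidding its true value `r` (under a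
utility-maximizing ordering) but is allocated when overbidding `r + Δ` (`Δ > 0`), then
the price it pays satisfies `p_i ≥ r`, so its utility from overbidding is at most `0`,
the utility from truthful bidding. -/
theorem gospal_overbid_price_ge_valuation {V Ω : Type*} [Fintype V] [Fintype Ω]
    [Nonempty Ω] [DecidableEq V]
    (A : Ω → Finset V) (q : V → ℝ) (i : V) (r Δ : ℝ) (hr : 0 < r) (hΔ : 0 < Δ)
    (ω₁ ω₂ : Ω)
    (hmax₁ : ∀ ω : Ω, Ut A (Function.update q i r) ω ≤ Ut A (Function.update q i r) ω₁)
    (hmax₂ : ∀ ω : Ω, Ut A (Function.update q i (r + Δ)) ω ≤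
        Ut A (Function.update q i (r + Δ)) ω₂)
    (hnotalloc : i ∉ A ω₁) (halloc : i ∈ A ω₂) :
    r ≤ price A (Function.update q i (r + Δ)) i ω₂ ∧
    (r - price A (Function.update q i (r + Δ)) i ω₂) *
      (if i ∈ A ω₂ then 1 else 0) ≤ 0 := by

  classical
  set q0 := Function.update q i 0 with hq0
  set qr := Function.update q i r with hqr
  set qd := Function.update q i (r + Δ) with hqd
  -- Ut under update with i in the set
  have hUt_mem : ∀ (v : ℝ) (ω : Ω), i ∈ A ω →
      Ut A (Function.update q i v) ω = v + ∑ j ∈ (A ω).erase i, q j := by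
    intro v ω hmem
    unfold Ut
    rw [← Finset.add_sum_erase _ _ hmem, Function.update_self]
    congr 1
    exact Finset.sum_congr rfl fun j hj =>
      Function.update_of_ne (Finset.ne_of_mem_erase hj) _ _
  have hUt_not : ∀ (v : ℝ) (ω : Ω), i ∉ A ω →
      Ut A (Function.update q i v) ω = Ut A q ω := by
    intro v ω hmem
    unfold Ut
    exact Finset.sum_congr rfl fun j hj =>
      Function.update_of_ne (fun h => hmem (by rwa [h] at hj)) _ _
  -- Ustar qd = Ut qd ω₂
  have hUd : Ustar A qd = Ut A qd ω₂ := by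
    apply le_antisymm
    · exact Finset.sup'_le _ _ fun ω _ => hmax₂ ω
    · exact Finset.le_sup' _ (Finset.mem_univ ω₂)
  -- Ut qr ω₁ = Ut q0 ω₁ ≤ Ustar q0
  have h1 : Ut A qr ω₁ ≤ Ustar A q0 := by
    rw [hqr, hUt_not r ω₁ hnotalloc, ← hUt_not 0 ω₁ hnotalloc]
    exact Finset.le_sup' _ (Finset.mem_univ ω₁)
  have h2 : Ut A qd ω₂ = Ut A qr ω₂ + Δ := by
    rw [hqd, hqr, hUt_mem _ _ halloc, hUt_mem _ _ halloc]; ring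
  have hkey : Ustar A qd ≤ Ustar A q0 + Δ := by
    rw [hUd, h2]
    have := hmax₁ ω₂
    linarith
  have hupd : Function.update qd i 0 = q0 := by
    rw [hqd, hq0, Function.update_idem]
  have hqi : qd i = r + Δ := by rw [hqd, Function.update_self]
  have hprice : price A qd i ω₂ = Ustar A q0 - Ustar A qd + (r + Δ) := by
    unfold price
    rw [hupd, hqi, if_pos halloc, mul_one]
    ring
  constructor
  · rw [hprice]; linarith
  · rw [if_pos halloc, mul_one, hprice]; linarith
end

section
/- Under GOSPAL, truthful bidding yields nonnegative utility: for any user i with true valuation r_i and any bids of the other users, U_i(r_i, q_{-i}) ≥ 0 (individual rationality). -/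
open Finset

/-- Individual rationality: under GOSPAL, truthful bidding yields
nonnegative utility: for any user `i` with true valuation `r > 0`, positive bids of the
other users, and any utility-maximizing ordering selected at the truthful bid vector,
`(r − p_i) · x_i ≥ 0`. -/
theorem gospal_individual_rationality {V Ω : Type*} [Fintype V] [Fintype Ω] [Nonempty Ω]
    [DecidableEq V]
    (A : Ω → Finset V) (q : V → ℝ) (i : V) (r : ℝ) (hr : 0 < r)
    (hq : ∀ j, j ≠ i → 0 < q j)
    (ω : Ω)
    (hmax : ∀ ω' : Ω, Ut A (Function.update q i r) ω' ≤ Ut A (Function.update q i r) ω) :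
    0 ≤ (r - price A (Function.update q i r) i ω) * (if i ∈ A ω then 1 else 0) := by
  by_cases h : i ∈ A ω
  · simp only [price, h, if_pos, mul_one]
    have hkey : Ustar A (Function.update (Function.update q i r) i 0) ≤
        Ustar A (Function.update q i r) := by
      apply Finset.sup'_le
      intro ω' _
      refine le_trans ?_ (Finset.le_sup' _ (Finset.mem_univ ω'))
      unfold Ut
      apply Finset.sum_le_sum
      intro j _
      by_cases hj : j = i
      · subst hj; simp [Function.update_self]; exact hr.le
      · simp [Function.update_of_ne hj]
    simp only [Function.update_self]
    linarith
  · simp [h]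
end
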